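/- Let 1 ≤ k ≤ b ≤ N, let I be a fixed b-element subset of an N-element set S, and let J be uniformly distributed over the b-element subsets of S. Then Pr[|I ∩ J| ≥ k] ≤ C(b,k) · ∏_{i=0}^{k−1} (b−i)/(N−i), where C(b,k) denotes the binomial coefficient. -/
import Mathlib


open Finset Nat

-- counting lemma: number of b-subsets of Fin N containing a fixed k-subset K
lemma count_supersets (N b k : ℕ) (hkb : k ≤ b) (K : Finset (Fin N)) (hK : K.card = k) :
    (univ.filter (fun J : {s : Finset (Fin N) // s.card = b} => K ⊆ J.1)).card
      = (N - k).choose (b - k) := by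
  classical
  have hKc : Kᶜ.card = N - k := by rw [Finset.card_compl, hK, Fintype.card_fin]
  rw [← hKc, ← Finset.card_powersetCard (b - k) Kᶜ]
  apply Finset.card_bij' (fun J _ => J.1 \ K) (fun A hA => ⟨A ∪ K, by
      simp only [Finset.mem_powersetCard] at hA
      rw [Finset.card_union_of_disjoint, hA.2, hK]
      · omega
      · exact Finset.disjoint_left.2 fun a ha => by
          have := hA.1 ha; simp_all⟩)
  · intro J hJ
    simp only [Finset.mem_filter, Finset.mem_univ, true_and] at hJ
    exact Subtype.ext (Finset.sdiff_union_of_subset hJ)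
  · intro A hA
    simp only [Finset.mem_powersetCard] at hA
    rw [Finset.union_sdiff_right, Finset.sdiff_eq_self_of_disjoint]
    exact Finset.disjoint_left.2 fun a ha => by have := hA.1 ha; simp_all
  · intro J hJ
    simp only [Finset.mem_filter, Finset.mem_univ, true_and] at hJ
    rw [Finset.mem_powersetCard]
    constructor
    · intro a ha; simp only [Finset.mem_sdiff] at ha; simp [ha.2]
    · rw [Finset.card_sdiff_of_subset hJ, J.2, hK]
  · intro A hA
    simp only [Finset.mem_filter, Finset.mem_univ, true_and]
    exact Finset.subset_union_right
theorem prob_overlap_ge_k (N b k : ℕ) (hk : 1 ≤ k) (hkb : k ≤ b) (hbN : b ≤ N)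
    (I : Finset (Fin N)) (hI : I.card = b) :
    ((univ.filter (fun J : {s : Finset (Fin N) // s.card = b} =>
        k ≤ (I ∩ J.1).card)).card : ℝ) / (N.choose b : ℝ)
    ≤ (b.choose k : ℝ) * ∏ i ∈ Finset.range k, ((b : ℝ) - i) / ((N : ℝ) - i) := by
  classical
  have hNb : (0 : ℝ) < N.choose b := by
    exact_mod_cast Nat.choose_pos hbN
  -- step 1: card bound
  have hcard : (univ.filter (fun J : {s : Finset (Fin N) // s.card = b} =>
      k ≤ (I ∩ J.1).card)).card ≤ b.choose k * (N - k).choose (b - k) := by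
    have hsub : (univ.filter (fun J : {s : Finset (Fin N) // s.card = b} =>
        k ≤ (I ∩ J.1).card)) ⊆ (I.powersetCard k).biUnion
          (fun K => univ.filter (fun J => K ⊆ J.1)) := by
      intro J hJ
      simp only [Finset.mem_filter, Finset.mem_univ, true_and] at hJ
      obtain ⟨K, hKsub, hKcard⟩ := Finset.exists_subset_card_eq hJ
      refine Finset.mem_biUnion.2 ⟨K, ?_, ?_⟩
      · exact Finset.mem_powersetCard.2 ⟨hKsub.trans Finset.inter_subset_left, hKcard⟩
      · simp only [Finset.mem_filter, Finset.mem_univ, true_and]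
        exact hKsub.trans Finset.inter_subset_right
    calc _ ≤ _ := Finset.card_le_card hsub
      _ ≤ ∑ K ∈ I.powersetCard k,
            (univ.filter (fun J : {s : Finset (Fin N) // s.card = b} => K ⊆ J.1)).card :=
          Finset.card_biUnion_le
      _ = ∑ K ∈ I.powersetCard k, (N - k).choose (b - k) := by
          apply Finset.sum_congr rfl
          intro K hK
          exact count_supersets N b k hkb K (Finset.mem_powersetCard.1 hK).2
      _ = b.choose k * (N - k).choose (b - k) := by
          rw [Finset.sum_const, Finset.card_powersetCard, hI, smul_eq_mul]
  -- step 2: the ratio identity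
  have hprod : ((N - k).choose (b - k) : ℝ) / (N.choose b : ℝ)
      = ∏ i ∈ Finset.range k, ((b : ℝ) - i) / ((N : ℝ) - i) := by
    have hNdpos : 0 < N.descFactorial k := by
      apply Nat.pos_of_ne_zero
      intro h0
      rw [Nat.descFactorial_eq_zero_iff_lt] at h0
      omega
    have key : (N - k).choose (b - k) * N.descFactorial k
        = N.choose b * b.descFactorial k := by
      have h1 : ((b - k)! * ((N - k) - (b - k))!) * ((N - k).choose (b - k) * N.descFactorial k)
          = ((b - k)! * ((N - k) - (b - k))!) * (N.choose b * b.descFactorial k) := by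
        have e1 : (N - k).choose (b - k) * ((b - k)! * ((N-k)-(b-k))!) = (N - k)! := by
          rw [← mul_assoc]; exact Nat.choose_mul_factorial_mul_factorial (by omega)
        have e2 : (N - k)! * N.descFactorial k = N ! :=
          Nat.factorial_mul_descFactorial (by omega)
        have e3 : (b - k)! * b.descFactorial k = b ! :=
          Nat.factorial_mul_descFactorial hkb
        have e4 : N.choose b * (b ! * (N - b)!) = N ! := by
          rw [← mul_assoc]; exact Nat.choose_mul_factorial_mul_factorial hbN
        have hNkb : (N - k) - (b - k) = N - b := by omega
        calc ((b - k)! * ((N - k) - (b - k))!) * ((N - k).choose (b - k) * N.descFactorial k)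
            = ((N - k).choose (b - k) * ((b - k)! * ((N-k)-(b-k))!)) * N.descFactorial k := by ring
          _ = (N - k)! * N.descFactorial k := by rw [e1]
          _ = N ! := e2
          _ = N.choose b * (b ! * (N - b)!) := e4.symm
          _ = N.choose b * (((b - k)! * b.descFactorial k) * (N - b)!) := by rw [e3]
          _ = ((b - k)! * ((N - k) - (b - k))!) * (N.choose b * b.descFactorial k) := by
              rw [hNkb]; ring
      exact Nat.eq_of_mul_eq_mul_left (by positivity) h1
    have hcastN : (N.descFactorial k : ℝ) = ∏ i ∈ Finset.range k, ((N : ℝ) - i) := by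
      rw [Nat.descFactorial_eq_prod_range, Nat.cast_prod]
      apply Finset.prod_congr rfl
      intro i hi
      have : i ≤ N := by have := Finset.mem_range.1 hi; omega
      push_cast [this]; ring
    have hcastb : (b.descFactorial k : ℝ) = ∏ i ∈ Finset.range k, ((b : ℝ) - i) := by
      rw [Nat.descFactorial_eq_prod_range, Nat.cast_prod]
      apply Finset.prod_congr rfl
      intro i hi
      have : i ≤ b := by have := Finset.mem_range.1 hi; omega
      push_cast [this]; ring
    have hdpos : (0 : ℝ) < N.descFactorial k := by exact_mod_cast hNdpos
    rw [Finset.prod_div_distrib, ← hcastN, ← hcastb, div_eq_div_iff hNb.ne' hdpos.ne']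
    exact_mod_cast key.trans (Nat.mul_comm _ _)
  calc ((univ.filter (fun J : {s : Finset (Fin N) // s.card = b} =>
        k ≤ (I ∩ J.1).card)).card : ℝ) / (N.choose b : ℝ)
      ≤ ((b.choose k * (N - k).choose (b - k) : ℕ) : ℝ) / (N.choose b : ℝ) := by
        gcongr ?_ / _
        exact_mod_cast hcard
    _ = (b.choose k : ℝ) * (((N - k).choose (b - k) : ℝ) / (N.choose b : ℝ)) := by
        push_cast; ring
    _ = _ := by rw [hprod]
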